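/- arXiv:2508.01706 — 2 statements merged into one kernel-verified Lean document; each statement's English description precedes it below -/
import Mathlib

section
/- Let X_1, X_2, ... be i.i.d. random variables with distribution (1-π)F + πH, where π ∈ (0,1), F is a distribution with a density with respect to Lebesgue measure, and H is a discrete distribution with countable support S. For each n, let R_n be the (random) set of values that appear at least twice among X_1,...,X_n. Then almost surely ⋃_{n=1}^∞ R_n = S. -/
open MeasureTheory ProbabilityTheory Filter
open scoped ENNReal Classical BigOperators

noncomputable section

variable {Ω : Type*}

/-- The (random) set of values appearing at least twice among `X 0, ..., X (n-1)`. -/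
def repeatedSet (X : ℕ → Ω → ℝ) (n : ℕ) (ω : Ω) : Set ℝ :=
  {x | 2 ≤ ((Finset.range n).filter (fun i => X i ω = x)).card}

/-- The mixture distribution `(1-π)F + πH`. -/
def mixture (π : ℝ) (F H : Measure ℝ) : Measure ℝ :=
  ENNReal.ofReal (1 - π) • F + ENNReal.ofReal π • H

lemma mixture_isFiniteMeasure (π : ℝ) (F H : Measure ℝ) [IsProbabilityMeasure F]
    [IsProbabilityMeasure H] : IsFiniteMeasure (mixture π F H) := by
  constructor
  simp [mixture]

/-- for i.i.d. samples from a discrete-continuous mixture, the union of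
the sets of repeated values is almost surely exactly the support `S` of the discrete part. -/
theorem stmt0 [MeasurableSpace Ω] (P : Measure Ω) [IsProbabilityMeasure P]
    (X : ℕ → Ω → ℝ) (hXmeas : ∀ i, Measurable (X i))
    (π : ℝ) (hπ : π ∈ Set.Ioo (0 : ℝ) 1)
    (F H : Measure ℝ) [IsProbabilityMeasure F] [IsProbabilityMeasure H]
    (hF : F ≪ volume)
    (S : Set ℝ) (hS : S.Countable) (hHS : H Sᶜ = 0) (hatom : ∀ x ∈ S, 0 < H {x})
    (hiid : iIndepFun X P)
    (hlaw : ∀ i, Measure.map (X i) P = mixture π F H) :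
    ∀ᵐ ω ∂P, (⋃ n, repeatedSet X n ω) = S := by
  have hμfin : IsFiniteMeasure (mixture π F H) := mixture_isFiniteMeasure π F H
  set μ := mixture π F H with hμ
  -- each point outside S is μ-null
  have hnullout : ∀ x ∉ S, μ {x} = 0 := by
    intro x hx
    have hF0 : F {x} = 0 := hF Real.volume_singleton
    have hH0 : H {x} = 0 := measure_mono_null (by simpa using hx) hHS
    simp [hμ, mixture, hF0, hH0]
  -- Part 1: each s ∈ S appears infinitely often a.s.
  have h1 : ∀ᵐ ω ∂P, ∀ s ∈ S, ∃ᶠ n in atTop, X n ω = s := by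
    rw [ae_ball_iff hS]
    intro s hs
    set A : ℕ → Set Ω := fun n => X n ⁻¹' {s} with hA
    have hAm : ∀ n, MeasurableSet (A n) := fun n => (hXmeas n) (measurableSet_singleton s)
    have hPA : ∀ n, P (A n) = μ {s} := by
      intro n
      rw [hA, ← Measure.map_apply (hXmeas n) (measurableSet_singleton s), hlaw n]
    have hμs : μ {s} ≠ 0 := by
      have : 0 < ENNReal.ofReal π * H {s} := by
        apply ENNReal.mul_pos
        · simpa [ENNReal.ofReal_pos] using hπ.1
        · exact (hatom s hs).ne'
      have hle : ENNReal.ofReal π * H {s} ≤ μ {s} := by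
        simp [hμ, mixture, le_add_iff_nonneg_left]
      exact fun h0 => absurd (h0 ▸ hle) (by simpa using this.not_ge)
    have hind : iIndepSet A P := by
      rw [iIndepSet_iff_meas_biInter hAm]
      intro t
      exact hiid.measure_inter_preimage_eq_mul t
        (sets := fun _ => {s}) (fun i _ => measurableSet_singleton s)
    have hsum : (∑' n, P (A n)) = ∞ := by
      simp only [hPA]
      exact ENNReal.tsum_const_eq_top_of_ne_zero hμs
    have hlim := measure_limsup_eq_one hAm hind hsum
    have : ∀ᵐ ω ∂P, ω ∈ limsup A atTop := by
      rw [ae_iff]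
      have hms : MeasurableSet (limsup A atTop) := MeasurableSet.measurableSet_limsup hAm
      have : P (limsup A atTop)ᶜ = 0 := by
        rw [measure_compl hms (measure_ne_top P _), hlim, measure_univ, tsub_self]
      exact this
    filter_upwards [this] with ω hω
    have := Filter.mem_limsup_iff_frequently_mem.1 hω
    simpa [hA, Set.mem_preimage] using this
  -- Part 2: a.s. no two distinct indices share a value outside S
  have h2 : ∀ᵐ ω ∂P, ∀ i j : ℕ, i ≠ j → ¬(X i ω = X j ω ∧ X i ω ∉ S) := by
    rw [ae_all_iff]
    intro i
    rw [ae_all_iff]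
    intro j
    rcases eq_or_ne i j with rfl | hij
    · filter_upwards with ω h; exact absurd rfl h
    · -- the bad event has probability zero
      have hSm : MeasurableSet S := hS.measurableSet
      set D : Set (ℝ × ℝ) := {p | p.1 = p.2 ∧ p.1 ∉ S} with hD
      have hDm : MeasurableSet D := by
        have h1m : MeasurableSet {p : ℝ × ℝ | p.1 = p.2} :=
          measurableSet_eq_fun measurable_fst measurable_snd
        have h2m : MeasurableSet {p : ℝ × ℝ | p.1 ∉ S} := (hSm.compl).preimage measurable_fst
        exact h1m.inter h2m
      have hindep : IndepFun (X i) (X j) P := hiid.indepFun hij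
      have hmap : P.map (fun ω => (X i ω, X j ω)) = μ.prod μ := by
        rw [(indepFun_iff_map_prod_eq_prod_map_map (hXmeas i).aemeasurable
          (hXmeas j).aemeasurable).1 hindep, hlaw i, hlaw j]
      have hprod0 : (μ.prod μ) D = 0 := by
        rw [Measure.prod_apply hDm]
        have : ∀ x : ℝ, μ (Prod.mk x ⁻¹' D) = 0 := by
          intro x
          by_cases hx : x ∈ S
          · have : Prod.mk x ⁻¹' D = ∅ := by
              ext y; simp [hD, hx]
            simp [this]
          · have : Prod.mk x ⁻¹' D ⊆ {x} := by
              intro y hy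
              simp only [hD, Set.mem_preimage, Set.mem_setOf_eq] at hy
              simp [← hy.1]
            exact measure_mono_null this (hnullout x hx)
        simp [this]
      have hev : P {ω | X i ω = X j ω ∧ X i ω ∉ S} = 0 := by
        have hpm : Measurable (fun ω => (X i ω, X j ω)) := (hXmeas i).prodMk (hXmeas j)
        have : {ω | X i ω = X j ω ∧ X i ω ∉ S} = (fun ω => (X i ω, X j ω)) ⁻¹' D := rfl
        rw [this, ← Measure.map_apply hpm hDm, hmap, hprod0]
      rw [ae_iff]
      refine measure_mono_null ?_ hev
      intro ω hω
      simp only [Set.mem_setOf_eq, _root_.not_imp, not_not] at hω ⊢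
      tauto
  -- Combine
  filter_upwards [h1, h2] with ω hω1 hω2
  ext x
  constructor
  · rintro hx
    obtain ⟨_, ⟨n, rfl⟩, hn⟩ := hx
    have hcard : 1 < ((Finset.range n).filter (fun i => X i ω = x)).card := hn
    obtain ⟨a, ha, b, hb, hab⟩ := Finset.one_lt_card.1 hcard
    have hax : X a ω = x := (Finset.mem_filter.1 ha).2
    have hbx : X b ω = x := (Finset.mem_filter.1 hb).2
    by_contra hxS
    exact hω2 a b hab ⟨hax.trans hbx.symm, hax ▸ hxS⟩
  · intro hx
    have hfreq := hω1 x hx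
    rw [frequently_atTop] at hfreq
    obtain ⟨a, -, ha⟩ := hfreq 0
    obtain ⟨b, hba, hb⟩ := hfreq (a + 1)
    refine Set.mem_iUnion.2 ⟨b + 1, ?_⟩
    have hmem : ∀ k, k ≤ b → X k ω = x →
        k ∈ (Finset.range (b + 1)).filter (fun i => X i ω = x) := by
      intro k hk hkx
      exact Finset.mem_filter.2 ⟨Finset.mem_range.2 (Nat.lt_succ_of_le hk), hkx⟩
    have h2le : 1 < ((Finset.range (b + 1)).filter (fun i => X i ω = x)).card :=
      Finset.one_lt_card.2 ⟨a, hmem a (le_trans (Nat.le_succ a) hba) ha, b, hmem b le_rfl hb,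
        by omega⟩
    exact h2le
end
end

section
/- Let X_1, X_2, ... be i.i.d. with distribution (1-π)F + πH, where F has a Lebesgue density and H is discrete with countable support S and masses {p_x}_{x∈S}. Let R_n be the set of values appearing at least twice among X_1,...,X_n. Then (1/n) Σ_{i=1}^n (1{X_i ∈ S} − 1{X_i ∈ R_n}) → 0 almost surely as n → ∞. -/
open MeasureTheory ProbabilityTheory Filter
open scoped ENNReal Classical BigOperators

noncomputable section

variable {Ω : Type*}

lemma mixture_apply (π : ℝ) (F H : Measure ℝ) (A : Set ℝ) :
    mixture π F H A = ENNReal.ofReal (1 - π) * F A + ENNReal.ofReal π * H A := by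
  simp [mixture]

lemma mixture_isProb {π : ℝ} (hπ : π ∈ Set.Ioo (0 : ℝ) 1) (F H : Measure ℝ)
    [IsProbabilityMeasure F] [IsProbabilityMeasure H] :
    IsProbabilityMeasure (mixture π F H) := by
  constructor
  rw [mixture_apply]
  simp only [measure_univ, mul_one]
  rw [← ENNReal.ofReal_add (by linarith [hπ.2]) (le_of_lt hπ.1)]
  norm_num

lemma mixture_singleton_eq_zero {π : ℝ} {F H : Measure ℝ} (hF : F ≪ volume)
    {S : Set ℝ} (hHS : H Sᶜ = 0) {x : ℝ} (hx : x ∉ S) :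
    mixture π F H {x} = 0 := by
  rw [mixture_apply]
  have h1 : F {x} = 0 := hF (Real.volume_singleton)
  have h2 : H {x} = 0 := measure_mono_null (Set.singleton_subset_iff.2 hx) hHS
  simp [h1, h2]

lemma mixture_le_H {π : ℝ} (hπ : π ∈ Set.Ioo (0 : ℝ) 1) {F H : Measure ℝ} (hF : F ≪ volume)
    {A : Set ℝ} (hA : A.Countable) :
    mixture π F H A ≤ H A := by
  rw [mixture_apply]
  have h1 : F A = 0 := hF (hA.measure_zero _)
  rw [h1, mul_zero, zero_add]
  calc ENNReal.ofReal π * H A ≤ 1 * H A := by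
        gcongr
        exact ENNReal.ofReal_le_one.2 (le_of_lt hπ.2)
    _ = H A := one_mul _

/-- the fraction of observations which are in the discrete support `S` but
have not (yet) been identified as repeated values tends to zero almost surely. -/
theorem stmt2 [MeasurableSpace Ω] (P : Measure Ω) [IsProbabilityMeasure P]
    (X : ℕ → Ω → ℝ) (hXmeas : ∀ i, Measurable (X i))
    (π : ℝ) (hπ : π ∈ Set.Ioo (0 : ℝ) 1)
    (F H : Measure ℝ) [IsProbabilityMeasure F] [IsProbabilityMeasure H]
    (hF : F ≪ volume)
    (S : Set ℝ) (hS : S.Countable) (hHS : H Sᶜ = 0) (hatom : ∀ x ∈ S, 0 < H {x})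
    (hiid : iIndepFun X P)
    (hlaw : ∀ i, Measure.map (X i) P = mixture π F H) :
    ∀ᵐ ω ∂P, Tendsto
      (fun n : ℕ => (1 / (n : ℝ)) * ∑ i ∈ Finset.range n,
        ((if X i ω ∈ S then (1 : ℝ) else 0) - (if X i ω ∈ repeatedSet X n ω then (1 : ℝ) else 0)))
      atTop (nhds 0) := by
  set μ : Measure ℝ := mixture π F H with hμ
  have hμprob : IsProbabilityMeasure μ := mixture_isProb hπ F H
  have hSmeas : MeasurableSet S := hS.measurableSet
  -- Step A: almost surely, any value achieved by two distinct indices lies in S.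
  have stepA : ∀ᵐ ω ∂P, ∀ i j : ℕ, i ≠ j → X i ω = X j ω → X i ω ∈ S := by
    rw [ae_all_iff]
    intro i
    rw [ae_all_iff]
    intro j
    by_cases hij : i = j
    · filter_upwards with ω h
      exact absurd hij h
    · -- use the product measure
      have hD : MeasurableSet {p : ℝ × ℝ | p.1 = p.2 ∧ p.1 ∉ S} := by
        refine (measurableSet_eq_fun measurable_fst measurable_snd).inter ?_
        exact measurable_fst hSmeas.compl
      have hindep : IndepFun (X i) (X j) P := hiid.indepFun hij
      have hmap : Measure.map (fun ω => (X i ω, X j ω)) P = μ.prod μ := by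
        rw [(indepFun_iff_map_prod_eq_prod_map_map (hXmeas i).aemeasurable
          (hXmeas j).aemeasurable).1 hindep, hlaw i, hlaw j]
      have hDnull : (μ.prod μ) {p : ℝ × ℝ | p.1 = p.2 ∧ p.1 ∉ S} = 0 := by
        rw [Measure.prod_apply hD]
        have : ∀ x : ℝ, μ (Prod.mk x ⁻¹' {p : ℝ × ℝ | p.1 = p.2 ∧ p.1 ∉ S}) = 0 := by
          intro x
          by_cases hx : x ∈ S
          · have he : (Prod.mk x ⁻¹' {p : ℝ × ℝ | p.1 = p.2 ∧ p.1 ∉ S}) = (∅ : Set ℝ) := by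
              ext y
              simp [hx]
            rw [he]
            exact measure_empty
          · have : (Prod.mk x ⁻¹' {p : ℝ × ℝ | p.1 = p.2 ∧ p.1 ∉ S}) = {x} := by
              ext y
              simp only [Set.mem_preimage, Set.mem_setOf_eq, Set.mem_singleton_iff]
              constructor
              · rintro ⟨h, -⟩; exact h.symm
              · rintro rfl; exact ⟨rfl, hx⟩
            rw [this]
            exact mixture_singleton_eq_zero hF hHS hx
        have h0 : ∀ x : ℝ, μ {a | x = a ∧ x ∉ S} = 0 := this
        simp [h0]
      have hpre : P ((fun ω => (X i ω, X j ω)) ⁻¹' {p : ℝ × ℝ | p.1 = p.2 ∧ p.1 ∉ S}) = 0 := by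
        rw [← Measure.map_apply ((hXmeas i).prodMk (hXmeas j)) hD, hmap]
        exact hDnull
      rw [ae_iff]
      convert hpre using 2
      ext ω
      simp only [Set.mem_setOf_eq, Set.mem_preimage]
      tauto
  -- Step B: every atom is hit infinitely often, almost surely.
  have stepB : ∀ᵐ ω ∂P, ∀ x ∈ S, ∃ᶠ i in atTop, X i ω = x := by
    rw [ae_ball_iff hS]
    intro x hx
    set s : ℕ → Set Ω := fun i => X i ⁻¹' {x} with hs
    have hsm : ∀ i, MeasurableSet (s i) := fun i => (hXmeas i) (measurableSet_singleton x)
    have hsindep : iIndepSet s P := by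
      rw [iIndepSet_iff_meas_biInter hsm]
      intro t
      exact hiid.meas_biInter (fun i _ => ⟨{x}, measurableSet_singleton x, rfl⟩)
    have hPs : ∀ i, P (s i) = μ {x} := by
      intro i
      rw [hs]
      rw [← Measure.map_apply (hXmeas i) (measurableSet_singleton x), hlaw i]
    have hpos : 0 < μ {x} := by
      rw [hμ, mixture_apply]
      have : 0 < ENNReal.ofReal π * H {x} :=
        ENNReal.mul_pos (ne_of_gt (ENNReal.ofReal_pos.2 hπ.1)) (ne_of_gt (hatom x hx))
      calc (0 : ℝ≥0∞) < ENNReal.ofReal π * H {x} := this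
        _ ≤ _ := le_add_self
    have htop : (∑' i : ℕ, P (s i)) = ∞ := by
      simp only [hPs]
      exact ENNReal.tsum_const_eq_top_of_ne_zero (ne_of_gt hpos)
    have hone := measure_limsup_eq_one hsm hsindep htop
    have hmeas_limsup : MeasurableSet (limsup s atTop) :=
      MeasurableSet.measurableSet_limsup fun i => hsm i
    have : P (limsup s atTop)ᶜ = 0 := by
      rw [measure_compl hmeas_limsup (measure_ne_top _ _), hone, measure_univ]
      simp
    filter_upwards [measure_eq_zero_iff_ae_notMem.1 this] with ω hω
    have hωmem : ω ∈ limsup s atTop := not_not.1 hω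
    rw [mem_limsup_iff_frequently_mem] at hωmem
    exact hωmem
  -- Choice of finite approximating sets and tail sets.
  -- T k : the tail set, S' k : finite subset of S.
  have hchoice : ∀ k : ℕ, ∃ (s' : Set ℝ), s' ⊆ S ∧ s'.Finite ∧
      (μ (S \ s')).toReal < 1 / (k + 1 : ℝ) := by
    intro k
    rcases Set.eq_empty_or_nonempty S with hSe | hSne
    · refine ⟨∅, by simp, Set.finite_empty, ?_⟩
      simp [hSe]
      positivity
    · obtain ⟨u, hu⟩ := hS.exists_eq_range hSne
      -- S = Set.range u
      have hanti : Antitone (fun m : ℕ => S \ u '' Set.Iio m) := by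
        intro a b hab
        apply Set.diff_subset_diff_right
        exact Set.image_mono (Set.Iio_subset_Iio (Nat.cast_le.2 hab))
      have hiInter : (⋂ m : ℕ, (S \ u '' Set.Iio m)) = ∅ := by
        ext y
        simp only [Set.mem_iInter, Set.mem_diff, Set.mem_empty_iff_false, iff_false, not_forall,
          not_and, not_not]
        by_cases hy : y ∈ S
        · rw [hu] at hy
          obtain ⟨m, hm⟩ := hy
          exact ⟨m + 1, fun _ => ⟨m, by simp, hm⟩⟩
        · exact ⟨0, fun h => absurd h hy⟩
      have htends : Tendsto (fun m : ℕ => H (S \ u '' Set.Iio m)) atTop (nhds 0) := by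
        have := tendsto_measure_iInter_atTop (μ := H)
          (fun m => ((hS.mono Set.diff_subset).measurableSet).nullMeasurableSet)
          hanti ⟨0, measure_ne_top _ _⟩
        rw [hiInter] at this
        simpa [Function.comp_def] using this
      have hlt : ∀ᶠ m in atTop, H (S \ u '' Set.Iio m) < ENNReal.ofReal (1 / (k + 1 : ℝ)) := by
        apply htends.eventually_lt_const
        simp only [ENNReal.ofReal_pos]
        positivity
      obtain ⟨m, hm⟩ := hlt.exists
      refine ⟨S ∩ u '' Set.Iio m, Set.inter_subset_left, ?_, ?_⟩
      · exact Set.Finite.inter_of_right ((Set.finite_Iio m).image u) S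
      · have hsub : S \ (S ∩ u '' Set.Iio m) = S \ u '' Set.Iio m := by
          ext y; simp only [Set.mem_diff, Set.mem_inter_iff]; tauto
        rw [hsub]
        have h1 : μ (S \ u '' Set.Iio m) ≤ H (S \ u '' Set.Iio m) :=
          mixture_le_H hπ hF (hS.mono Set.diff_subset)
        have h2 : μ (S \ u '' Set.Iio m) < ENNReal.ofReal (1 / (k + 1 : ℝ)) :=
          lt_of_le_of_lt h1 hm
        exact ENNReal.toReal_lt_of_lt_ofReal h2
  choose S' hS'sub hS'fin hS'lt using hchoice
  -- Step C: strong law of large numbers for the indicators of the tail sets.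
  have stepC : ∀ᵐ ω ∂P, ∀ k : ℕ, Tendsto
      (fun n : ℕ => (n : ℝ)⁻¹ * ∑ i ∈ Finset.range n,
        (if X i ω ∈ S \ S' k then (1 : ℝ) else 0)) atTop (nhds ((μ (S \ S' k)).toReal)) := by
    rw [ae_all_iff]
    intro k
    have hT : MeasurableSet (S \ S' k) := hSmeas.diff (hS'fin k).measurableSet
    set Y : ℕ → Ω → ℝ := fun i ω => Set.indicator (S \ S' k) (fun _ => (1 : ℝ)) (X i ω) with hY
    have hindic : Y 0 = Set.indicator (X 0 ⁻¹' (S \ S' k)) (fun _ => (1 : ℝ)) := by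
      ext ω
      simp [hY, Set.indicator_apply]
    have hint : Integrable (Y 0) P := by
      rw [hindic]
      exact (integrable_const 1).indicator ((hXmeas 0) hT)
    have hindep : Pairwise (Function.onFun (IndepFun · · P) Y) := fun i j hij =>
      (hiid.indepFun hij).comp (measurable_const.indicator hT) (measurable_const.indicator hT)
    have hident : ∀ i, IdentDistrib (Y i) (Y 0) P P := by
      intro i
      have hXid : IdentDistrib (X i) (X 0) P P :=
        ⟨(hXmeas i).aemeasurable, (hXmeas 0).aemeasurable, by rw [hlaw i, hlaw 0]⟩
      exact hXid.comp (measurable_const.indicator hT)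
    have hslln := strong_law_ae Y hint hindep hident
    have hEY : (∫ ω, Y 0 ω ∂P) = (μ (S \ S' k)).toReal := by
      rw [hindic, integral_indicator_const _ ((hXmeas 0) hT), measureReal_def,
        ← Measure.map_apply (hXmeas 0) hT, hlaw 0]
      simp
    rw [hEY] at hslln
    filter_upwards [hslln] with ω hω
    have heq : (fun n : ℕ => (n : ℝ)⁻¹ * ∑ i ∈ Finset.range n,
        (if X i ω ∈ S \ S' k then (1 : ℝ) else 0))
        = fun n : ℕ => (n : ℝ)⁻¹ • ∑ i ∈ Finset.range n, Y i ω := by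
      funext n
      rw [smul_eq_mul]
      congr 1
      exact Finset.sum_congr rfl fun i _ => by simp [hY, Set.indicator_apply]
    rw [heq]
    exact hω
  -- Final assembly
  filter_upwards [stepA, stepB, stepC] with ω hA hB hC
  rw [NormedAddCommGroup.tendsto_nhds_zero]
  intro ε hε
  obtain ⟨k, hk⟩ := exists_nat_one_div_lt hε
  have hck : (μ (S \ S' k)).toReal < ε := lt_trans (hS'lt k) (by exact_mod_cast hk)
  have h1 : ∀ᶠ (n : ℕ) in atTop, (n : ℝ)⁻¹ * ∑ i ∈ Finset.range n,
      (if X i ω ∈ S \ S' k then (1 : ℝ) else 0) < ε :=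
    (hC k).eventually_lt_const hck
  have h2 : ∀ᶠ n in atTop, ∀ x ∈ S' k, x ∈ repeatedSet X n ω := by
    rw [eventually_all_finite (hS'fin k)]
    intro x hx
    have hfreq : ∃ᶠ i in atTop, X i ω = x := hB x (hS'sub k hx)
    obtain ⟨i, hi⟩ := hfreq.exists
    obtain ⟨j, hj, hij⟩ := (hfreq.and_eventually (eventually_gt_atTop i)).exists
    filter_upwards [eventually_ge_atTop (j + 1)] with n hn
    show 2 ≤ ((Finset.range n).filter (fun t => X t ω = x)).card
    have hsub : ({i, j} : Finset ℕ) ⊆ (Finset.range n).filter (fun t => X t ω = x) := by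
      intro t ht
      simp only [Finset.mem_insert, Finset.mem_singleton] at ht
      rcases ht with rfl | rfl
      · exact Finset.mem_filter.2 ⟨Finset.mem_range.2 (by omega), hi⟩
      · exact Finset.mem_filter.2 ⟨Finset.mem_range.2 (by omega), hj⟩
    calc 2 = ({i, j} : Finset ℕ).card := (Finset.card_pair (by omega)).symm
      _ ≤ _ := Finset.card_le_card hsub
  filter_upwards [h1, h2] with n hn1 hn2
  -- termwise bounds
  have key : ∀ i ∈ Finset.range n,
      (0 ≤ (if X i ω ∈ S then (1 : ℝ) else 0)
            - (if X i ω ∈ repeatedSet X n ω then (1 : ℝ) else 0)) ∧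
      ((if X i ω ∈ S then (1 : ℝ) else 0)
            - (if X i ω ∈ repeatedSet X n ω then (1 : ℝ) else 0)
        ≤ (if X i ω ∈ S \ S' k then (1 : ℝ) else 0)) := by
    intro i hi
    by_cases hR : X i ω ∈ repeatedSet X n ω
    · have hcard : 2 ≤ ((Finset.range n).filter (fun t => X t ω = X i ω)).card := hR
      obtain ⟨j, hjmem, hji⟩ :=
        Finset.exists_mem_ne (lt_of_lt_of_le one_lt_two hcard) i
      have hXj : X j ω = X i ω := (Finset.mem_filter.1 hjmem).2
      have hXS : X i ω ∈ S := hA i j (Ne.symm hji) hXj.symm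
      simp only [hR, hXS, if_true]
      constructor
      · linarith
      · split <;> norm_num
    · by_cases hXS : X i ω ∈ S
      · have hnot : X i ω ∉ S' k := fun hmem => hR (hn2 _ hmem)
        have hd : X i ω ∈ S \ S' k := ⟨hXS, hnot⟩
        simp only [hR, hXS, hd, if_true, if_false]
        norm_num
      · have hnd : X i ω ∉ S \ S' k := fun h => hXS h.1
        simp only [hR, hXS, if_false, hnd]
        norm_num
  have hsum0 : (0 : ℝ) ≤ ∑ i ∈ Finset.range n,
      ((if X i ω ∈ S then (1 : ℝ) else 0)
        - (if X i ω ∈ repeatedSet X n ω then (1 : ℝ) else 0)) :=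
    Finset.sum_nonneg fun i hi => (key i hi).1
  have hsumle : ∑ i ∈ Finset.range n,
      ((if X i ω ∈ S then (1 : ℝ) else 0)
        - (if X i ω ∈ repeatedSet X n ω then (1 : ℝ) else 0))
      ≤ ∑ i ∈ Finset.range n, (if X i ω ∈ S \ S' k then (1 : ℝ) else 0) :=
    Finset.sum_le_sum fun i hi => (key i hi).2
  have hnn : (0 : ℝ) ≤ 1 / (n : ℝ) := by positivity
  rw [Real.norm_of_nonneg (mul_nonneg hnn hsum0)]
  calc (1 / (n : ℝ)) * ∑ i ∈ Finset.range n,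
      ((if X i ω ∈ S then (1 : ℝ) else 0)
        - (if X i ω ∈ repeatedSet X n ω then (1 : ℝ) else 0))
      ≤ (1 / (n : ℝ)) * ∑ i ∈ Finset.range n, (if X i ω ∈ S \ S' k then (1 : ℝ) else 0) := by
        gcongr
    _ = (n : ℝ)⁻¹ * ∑ i ∈ Finset.range n, (if X i ω ∈ S \ S' k then (1 : ℝ) else 0) := by
        rw [one_div]
    _ < ε := hn1
end
end
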